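/- (Telescoping bound in the HCGS analysis.) Let G, D > 0 and define a nonnegative sequence (ε_t)_{t≥0} by ε₀ arbitrary and satisfying, for all t ≥ 0, ε_{t+1} ≤ (t/(t+2))ε_t + GD·√(t+2)/(t+2)² + GD·(√(t+3) − √(t+2))/√((t+3)(t+2)). Then for all t ≥ 1, ε_{t+1} ≤ (2/3)GD·(t+3)^{3/2}/((t+1)(t+2)) + GD/√(t+2), and in particular ε_{t+1} ≤ 3GD/√(t+2). -/

import Mathlib

set_option maxHeartbeats 1000000

private lemma cube_step (a b : ℝ) (ha : 0 ≤ a) (hab : a ≤ b) (h : b^2 = a^2 + 1) :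
    (3/2) * a ≤ b^3 - a^3 := by
  have hb : 1 ≤ b := by nlinarith
  nlinarith [sq_nonneg (b - a), mul_nonneg ha (sq_nonneg (b-a)),
    mul_nonneg (le_trans ha hab) (sq_nonneg (b-a))]


private lemma boundA (x sb sc : ℝ) (hx0 : 0 ≤ x)
    (hsbq : sb ^ 2 = x + 3) (hscq : sc ^ 2 = x + 4)
    (hsbn : 0 ≤ sb) (hscn : 0 ≤ sc) (hbc : sb ≤ sc) :
    (x + 2) * sb / (x + 3) ≤ (2/3) * ((x + 4) * sc - (x + 3) * sb) := by
  have h3 : (0:ℝ) < x + 3 := by linarith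
  have h1 : (x + 2) * sb / (x + 3) ≤ sb := by
    rw [div_le_iff₀ h3]; nlinarith
  have h2 : (3/2) * sb ≤ sc ^ 3 - sb ^ 3 :=
    cube_step sb sc hsbn hbc (by nlinarith)
  have h3' : sc ^ 3 = (x + 4) * sc := by
    calc sc ^ 3 = sc ^ 2 * sc := by ring
      _ = (x + 4) * sc := by rw [hscq]
  have h4' : sb ^ 3 = (x + 3) * sb := by
    calc sb ^ 3 = sb ^ 2 * sb := by ring
      _ = (x + 3) * sb := by rw [hsbq]
  nlinarith [h1, h2, h3', h4']

private lemma boundB (x sa sb sc : ℝ) (hx0 : 0 ≤ x)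
    (hsaq : sa ^ 2 = x + 2) (hsbq : sb ^ 2 = x + 3) (hscq : sc ^ 2 = x + 4)
    (hsan : 0 ≤ sa) (hsbn : 0 ≤ sb) (hscn : 0 ≤ sc)
    (hab : sa ≤ sb) (hbc : sb ≤ sc) :
    (x + 2) * (x + 3) * (sc - sb) / (sc * sb) ≤ (x + 2) * sb - (x + 1) * sa := by
  have hsa1 : 1 ≤ sa := by nlinarith
  have hsb1 : 1 ≤ sb := by nlinarith
  have hcb : (0:ℝ) < sc * sb := by nlinarith
  have hdiff : (sc - sb) * (sc + sb) = 1 := by linear_combination hscq - hsbq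
  have h1 : (x + 2) * (x + 3) * (sc - sb) / (sc * sb) ≤ sa := by
    rw [div_le_iff₀ hcb]
    have hpos : (0:ℝ) < sc + sb := by linarith
    rw [← mul_le_mul_iff_of_pos_right hpos]
    have ht : (x + 2) * (x + 3) * (sc - sb) * (sc + sb) = (x + 2) * (x + 3) := by
      linear_combination ((x + 2) * (x + 3)) * hdiff
    rw [ht]
    have e1 : sa * (sc * sb) * (sc + sb) = sa * sb * (x + 4) + sa * sc * (x + 3) := by
      linear_combination (sa * sb) * hscq + (sa * sc) * hsbq
    have e2 : x + 2 ≤ sa * sb := by nlinarith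
    have e3 : x + 2 ≤ sa * sc := by nlinarith
    nlinarith [e1, e2, e3]
  nlinarith [h1]

private lemma key_bound (G D : ℝ) (hG : 0 < G) (hD : 0 < D)
    (ε : ℕ → ℝ) (hnn : ∀ t, 0 ≤ ε t)
    (hrec : ∀ t : ℕ, ε (t + 1) ≤
      ((t : ℝ) / ((t : ℝ) + 2)) * ε t
      + G * D * Real.sqrt ((t : ℝ) + 2) / ((t : ℝ) + 2) ^ 2
      + G * D * (Real.sqrt ((t : ℝ) + 3) - Real.sqrt ((t : ℝ) + 2)) /
          Real.sqrt (((t : ℝ) + 3) * ((t : ℝ) + 2))) :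
    ∀ t : ℕ, ((t : ℝ) + 1) * ((t : ℝ) + 2) * ε (t + 1) ≤
      G * D * ((2/3) * (((t : ℝ) + 3) * Real.sqrt ((t : ℝ) + 3))
        + ((t : ℝ) + 1) * Real.sqrt ((t : ℝ) + 2)) := by
  have hGD : 0 < G * D := mul_pos hG hD
  intro t
  induction t with
  | zero =>
    have h0 := hrec 0
    norm_num at h0 ⊢
    set s2 := Real.sqrt 2 with hs2
    set s3 := Real.sqrt 3 with hs3
    have hs2sq : s2 ^ 2 = 2 := Real.sq_sqrt (by norm_num)
    have hs3sq : s3 ^ 2 = 3 := Real.sq_sqrt (by norm_num)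
    have hs2n : 0 ≤ s2 := Real.sqrt_nonneg _
    have hs3n : 0 ≤ s3 := Real.sqrt_nonneg _
    have h23 : s2 ≤ s3 := Real.sqrt_le_sqrt (by norm_num)
    have h6ge : (1:ℝ) ≤ Real.sqrt 6 := by
      rw [show (1:ℝ) = Real.sqrt 1 by simp]
      exact Real.sqrt_le_sqrt (by norm_num)
    have hdiv : (s3 - s2) / Real.sqrt 6 ≤ s3 - s2 :=
      div_le_self (by linarith) h6ge
    have hone : (1:ℝ) ≤ s2 := by nlinarith
    have h1 : G * D * (s3 - s2) / Real.sqrt 6 ≤ G * D * (s3 - s2) := by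
      rw [mul_div_assoc]
      have := mul_le_mul_of_nonneg_left hdiv hGD.le
      linarith
    nlinarith [h0, h1]
  | succ t ih =>
    have hx0 : (0:ℝ) ≤ (t:ℝ) := Nat.cast_nonneg t
    set x := (t : ℝ) with hx
    have hr := hrec (t + 1)
    push_cast at hr ⊢
    rw [show x + 1 + 2 = x + 3 from by ring, show x + 1 + 3 = x + 4 from by ring,
      show (x + 4) * (x + 3) = (x + 4) * (x + 3) from rfl] at hr
    rw [show x + 1 + 2 = x + 3 from by ring, show x + 1 + 3 = x + 4 from by ring,
      show x + 1 + 1 = x + 2 from by ring]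
    set sa := Real.sqrt (x + 2) with hsa
    set sb := Real.sqrt (x + 3) with hsb
    set sc := Real.sqrt (x + 4) with hsc
    have hsaq : sa ^ 2 = x + 2 := Real.sq_sqrt (by linarith)
    have hsbq : sb ^ 2 = x + 3 := Real.sq_sqrt (by linarith)
    have hscq : sc ^ 2 = x + 4 := Real.sq_sqrt (by linarith)
    have hsan : 0 ≤ sa := Real.sqrt_nonneg _
    have hsbn : 0 ≤ sb := Real.sqrt_nonneg _
    have hscn : 0 ≤ sc := Real.sqrt_nonneg _
    have hab : sa ≤ sb := Real.sqrt_le_sqrt (by linarith)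
    have hbc : sb ≤ sc := Real.sqrt_le_sqrt (by linarith)
    have hsa1 : 1 ≤ sa := by nlinarith
    have hsb1 : 1 ≤ sb := by nlinarith
    have hsc1 : 1 ≤ sc := by nlinarith
    have hprod : Real.sqrt ((x + 4) * (x + 3)) = sc * sb := by
      rw [hsc, hsb, ← Real.sqrt_mul (by linarith)]
    rw [hprod] at hr
    have h3 : (0:ℝ) < x + 3 := by linarith
    have hcb : (0:ℝ) < sc * sb := by nlinarith
    -- multiply recursion by (x+2)(x+3)
    have hmul : (x + 2) * (x + 3) * ε (t + 1 + 1) ≤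
        (x + 1) * (x + 2) * ε (t + 1)
        + G * D * ((x + 2) * sb) / (x + 3)
        + G * D * ((x + 2) * (x + 3) * (sc - sb)) / (sc * sb) := by
      have hc := mul_le_mul_of_nonneg_left hr
        (by positivity : (0:ℝ) ≤ (x + 2) * (x + 3))
      calc (x + 2) * (x + 3) * ε (t + 1 + 1)
          ≤ (x + 2) * (x + 3) * ((x + 1) / (x + 3) * ε (t + 1)
            + G * D * sb / (x + 3) ^ 2
            + G * D * (sc - sb) / (sc * sb)) := hc
        _ = (x + 1) * (x + 2) * ε (t + 1)
            + G * D * ((x + 2) * sb) / (x + 3)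
            + G * D * ((x + 2) * (x + 3) * (sc - sb)) / (sc * sb) := by
            field_simp
    have hA : G * D * ((x + 2) * sb) / (x + 3) ≤
        G * D * ((2/3) * ((x + 4) * sc - (x + 3) * sb)) := by
      rw [mul_div_assoc]
      exact mul_le_mul_of_nonneg_left
        (boundA x sb sc hx0 hsbq hscq hsbn hscn hbc) hGD.le
    have hB : G * D * ((x + 2) * (x + 3) * (sc - sb)) / (sc * sb) ≤
        G * D * ((x + 2) * sb - (x + 1) * sa) := by
      rw [mul_div_assoc]
      exact mul_le_mul_of_nonneg_left
        (boundB x sa sb sc hx0 hsaq hsbq hscq hsan hsbn hscn hab hbc) hGD.le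
    have hfin := le_trans hmul (by linarith [hA, hB, ih] :
      (x + 1) * (x + 2) * ε (t + 1)
        + G * D * ((x + 2) * sb) / (x + 3)
        + G * D * ((x + 2) * (x + 3) * (sc - sb)) / (sc * sb) ≤
      G * D * ((2/3) * ((x + 3) * sb) + (x + 1) * sa)
        + G * D * ((2/3) * ((x + 4) * sc - (x + 3) * sb))
        + G * D * ((x + 2) * sb - (x + 1) * sa))
    calc (x + 2) * (x + 3) * ε (t + 1 + 1) ≤ _ := hfin
      _ = G * D * (2/3 * ((x + 4) * sc) + (x + 2) * sb) := by ring

theorem stmt_18 (G D : ℝ) (hG : 0 < G) (hD : 0 < D)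
    (ε : ℕ → ℝ) (hnn : ∀ t, 0 ≤ ε t)
    (hrec : ∀ t : ℕ, ε (t + 1) ≤
      ((t : ℝ) / ((t : ℝ) + 2)) * ε t
      + G * D * Real.sqrt ((t : ℝ) + 2) / ((t : ℝ) + 2) ^ 2
      + G * D * (Real.sqrt ((t : ℝ) + 3) - Real.sqrt ((t : ℝ) + 2)) /
          Real.sqrt (((t : ℝ) + 3) * ((t : ℝ) + 2))) :
    ∀ t : ℕ, 1 ≤ t →
      ε (t + 1) ≤ (2 / 3) * G * D * ((t : ℝ) + 3) ^ ((3 : ℝ) / 2) /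
          (((t : ℝ) + 1) * ((t : ℝ) + 2)) + G * D / Real.sqrt ((t : ℝ) + 2) ∧
      ε (t + 1) ≤ 3 * G * D / Real.sqrt ((t : ℝ) + 2) := by
  have hGD : 0 < G * D := mul_pos hG hD
  intro t ht
  have key := key_bound G D hG hD ε hnn hrec t
  have hx1 : (1:ℝ) ≤ (t:ℝ) := by exact_mod_cast ht
  set x := (t : ℝ) with hx
  set sa := Real.sqrt (x + 2) with hsa
  set sb := Real.sqrt (x + 3) with hsb
  have hsaq : sa ^ 2 = x + 2 := Real.sq_sqrt (by linarith)
  have hsbq : sb ^ 2 = x + 3 := Real.sq_sqrt (by linarith)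
  have hsan : 0 ≤ sa := Real.sqrt_nonneg _
  have hsbn : 0 ≤ sb := Real.sqrt_nonneg _
  have hab : sa ≤ sb := Real.sqrt_le_sqrt (by linarith)
  have hsa1 : 1 ≤ sa := by nlinarith
  have hsb1 : 1 ≤ sb := by nlinarith
  have h12 : (0:ℝ) < (x + 1) * (x + 2) := by nlinarith
  have hrpow : (x + 3) ^ ((3:ℝ)/2) = (x + 3) * sb := by
    rw [show (3:ℝ)/2 = 1 + 1/2 from by norm_num, Real.rpow_add (by linarith),
      Real.rpow_one, hsb, Real.sqrt_eq_rpow]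
  have hdiv : ε (t + 1) ≤
      G * D * ((2/3) * ((x + 3) * sb) + (x + 1) * sa) / ((x + 1) * (x + 2)) := by
    rw [le_div_iff₀ h12]
    calc ε (t + 1) * ((x + 1) * (x + 2)) = (x + 1) * (x + 2) * ε (t + 1) := by ring
      _ ≤ _ := key
  have heq : G * D * ((2/3) * ((x + 3) * sb) + (x + 1) * sa) / ((x + 1) * (x + 2)) =
      2 / 3 * G * D * ((x + 3) ^ ((3:ℝ)/2)) / ((x + 1) * (x + 2)) + G * D / sa := by
    rw [hrpow]
    have hsane : sa ≠ 0 := by linarith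
    field_simp
    linear_combination (3*(x+1)) * hsaq
  have conj1 : ε (t + 1) ≤ 2 / 3 * G * D * ((x + 3) ^ ((3:ℝ)/2)) / ((x + 1) * (x + 2))
      + G * D / sa := by rw [← heq]; exact hdiv
  refine ⟨conj1, ?_⟩
  -- second: first term ≤ 2*G*D/sa
  have hkey2 : (x + 3) * sb * sa ≤ 3 * ((x + 1) * (x + 2)) := by
    have hsq : ((x + 3) * sb * sa) ^ 2 ≤ (3 * ((x + 1) * (x + 2))) ^ 2 := by
      have e : ((x + 3) * sb * sa) ^ 2 = (x + 3) ^ 2 * (x + 3) * (x + 2) := by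
        linear_combination ((x+3)^2*sa^2)*hsbq + ((x+3)^2*(x+3))*hsaq
      rw [e]
      nlinarith [hx1, sq_nonneg (x-1), sq_nonneg x]
    have hann : (0:ℝ) ≤ (x + 3) * sb * sa := by positivity
    have hbnn : (0:ℝ) ≤ 3 * ((x + 1) * (x + 2)) := by nlinarith
    calc (x + 3) * sb * sa = Real.sqrt (((x + 3) * sb * sa) ^ 2) := (Real.sqrt_sq hann).symm
      _ ≤ Real.sqrt ((3 * ((x + 1) * (x + 2))) ^ 2) := Real.sqrt_le_sqrt hsq
      _ = 3 * ((x + 1) * (x + 2)) := Real.sqrt_sq hbnn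
  have hterm : 2 / 3 * G * D * ((x + 3) ^ ((3:ℝ)/2)) / ((x + 1) * (x + 2)) ≤
      2 * G * D / sa := by
    rw [hrpow, div_le_div_iff₀ h12 (by linarith : (0:ℝ) < sa)]
    have := mul_le_mul_of_nonneg_left hkey2 (by positivity : (0:ℝ) ≤ (2/3) * (G*D))
    nlinarith [this]
  have : G * D / sa + 2 * G * D / sa = 3 * G * D / sa := by ring
  linarith [conj1, hterm]
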